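/- If P = {f_1, …, f_n} is a pseudo-triangular basis of fuzzy sets, then the range of T_P equals the Hamiltonian path ⋃_{i=1}^{n−1} conv{e_i, e_{i+1}} in the 1-skeleton of the fundamental simplex Δ_n. -/

import Mathlib

/-- If `P = {f_1,…,f_n}` is a pseudo-triangular basis with nodes
`0 = t_1 < ⋯ < t_n = 1`, then the range of `T_P`
equals the Hamiltonian path `⋃_{i=1}^{n−1} conv{e_i, e_{i+1}}`. -/
theorem stmt4 (n : ℕ) (hn : 2 ≤ n) (f : Fin n → ℝ → ℝ) (t : Fin n → ℝ)
    (hcont : ∀ i, ContinuousOn (f i) (Set.Icc 0 1))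
    (hmap : ∀ i, Set.MapsTo (f i) (Set.Icc 0 1) (Set.Icc 0 1))
    (hmono : StrictMono t)
    (ht0 : t ⟨0, by omega⟩ = 0)
    (ht1 : t ⟨n - 1, by omega⟩ = 1)
    (ha : ∀ i : Fin n, ∀ hi : (i : ℕ) + 1 < n,
        f i (t i) = 1 ∧ f i (t ⟨(i : ℕ) + 1, hi⟩) = 0)
    (hb : ∀ i : Fin n, ∀ hi : (i : ℕ) + 1 < n, ∀ j : Fin n,
        j ≠ i → j ≠ ⟨(i : ℕ) + 1, hi⟩ →
        ∀ x ∈ Set.Icc (t i) (t ⟨(i : ℕ) + 1, hi⟩), f j x = 0)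
    (hc : ∀ i : Fin n, ∀ hi : (i : ℕ) + 1 < n,
        ∀ x ∈ Set.Icc (t i) (t ⟨(i : ℕ) + 1, hi⟩),
        f ⟨(i : ℕ) + 1, hi⟩ x = 1 - f i x)
    (hd : ∀ i : Fin n, ∀ hi : (i : ℕ) + 1 < n,
        Set.BijOn (f i) (Set.Icc (t i) (t ⟨(i : ℕ) + 1, hi⟩)) (Set.Icc 0 1) ∧
        Set.BijOn (f ⟨(i : ℕ) + 1, hi⟩)
          (Set.Icc (t i) (t ⟨(i : ℕ) + 1, hi⟩)) (Set.Icc 0 1)) :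
    ∀ i : Fin n, ∀ hi : (i : ℕ) + 1 < n,
    (fun x => (WithLp.toLp 2 (fun j => f j x) : EuclideanSpace ℝ (Fin n))) '' (Set.Icc 0 1) =
      ⋃ i : Fin n, ⋃ hi : (i : ℕ) + 1 < n,
        segment ℝ (EuclideanSpace.single i 1)
          (EuclideanSpace.single (⟨(i : ℕ) + 1, hi⟩ : Fin n) 1) := by
  intro _i _hi
  have ht_nonneg : ∀ i : Fin n, (0:ℝ) ≤ t i := by
    intro i
    rw [← ht0]
    exact hmono.monotone (by simp [Fin.le_def])
  have ht_le_one : ∀ i : Fin n, t i ≤ 1 := by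
    intro i
    rw [← ht1]
    exact hmono.monotone (by simp [Fin.le_def]; omega)
  -- key: coordinates of T x on a subinterval
  have key : ∀ i : Fin n, ∀ hi : (i : ℕ) + 1 < n, ∀ x ∈ Set.Icc (t i) (t ⟨(i:ℕ)+1, hi⟩),
      (WithLp.toLp 2 (fun j => f j x) : EuclideanSpace ℝ (Fin n)) =
        (f i x) • EuclideanSpace.single i 1 +
        (1 - f i x) • EuclideanSpace.single (⟨(i:ℕ)+1, hi⟩ : Fin n) 1 := by
    intro i hi x hx
    ext j
    have hne : i ≠ (⟨(i:ℕ)+1, hi⟩ : Fin n) := by simp [Fin.ext_iff]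
    have expand : ∀ c d : ℝ,
        ((c • EuclideanSpace.single i (1:ℝ) +
          d • EuclideanSpace.single (⟨(i:ℕ)+1, hi⟩ : Fin n) 1 : EuclideanSpace ℝ (Fin n))) j
        = c * (if j = i then 1 else 0) + d * (if j = (⟨(i:ℕ)+1, hi⟩ : Fin n) then 1 else 0) := by
      intro c d
      simp [PiLp.add_apply, PiLp.smul_apply, EuclideanSpace.single_apply]
    show f j x = _
    rw [expand]
    by_cases hji : j = i
    · simp [hji, hne]
    · by_cases hji' : j = (⟨(i:ℕ)+1, hi⟩ : Fin n)
      · simp [hji', Ne.symm hne, hc i hi x hx]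
      · simp [hji, hji', hb i hi j hji hji' x hx]
  ext p
  simp only [Set.mem_image, Set.mem_iUnion]
  constructor
  · rintro ⟨x, hx, rfl⟩
    -- find i with x ∈ [t i, t (i+1)]
    obtain ⟨i, hi, h1, h2⟩ : ∃ i : Fin n, ∃ hi : (i:ℕ)+1 < n,
        t i ≤ x ∧ x ≤ t ⟨(i:ℕ)+1, hi⟩ := by
      classical
      set S : Finset (Fin n) := Finset.univ.filter (fun i => t i ≤ x) with hS
      have hSne : S.Nonempty := ⟨⟨0, by omega⟩, by simp [hS, ht0, hx.1]⟩
      set m := S.max' hSne with hm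
      have hmS : m ∈ S := S.max'_mem hSne
      have hmx : t m ≤ x := by simpa [hS] using hmS
      by_cases hcase : (m : ℕ) + 1 < n
      · refine ⟨m, hcase, hmx, ?_⟩
        by_contra hlt
        push_neg at hlt
        have : (⟨(m:ℕ)+1, hcase⟩ : Fin n) ∈ S := by simp [hS]; linarith
        have := S.le_max' _ this
        simp [Fin.le_def] at this
        exact lt_irrefl _ this
      · have hmeq : (m : ℕ) = n - 1 := by have := m.isLt; omega
        have hx1 : x = 1 := by
          have : t m = 1 := by rw [← ht1]; congr 1; exact Fin.ext hmeq
          have := ht_le_one m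
          have h1 : (1:ℝ) ≤ x := by rw [← ‹t m = 1›]; exact hmx
          linarith [hx.2]
        refine ⟨⟨n-2, by omega⟩, by simp; omega, ?_, ?_⟩
        · exact (ht_le_one _).trans_eq hx1.symm
        · refine hx1.trans_le ?_
          have : (⟨n-2+1, by omega⟩ : Fin n) = ⟨n-1, by omega⟩ := by
            apply Fin.ext; simp; omega
          rw [this, ht1]
    have hfx := (hd i hi).1.mapsTo ⟨h1, h2⟩
    refine ⟨i, hi, f i x, 1 - f i x, hfx.1, by linarith [hfx.2], by ring, ?_⟩
    exact (key i hi x ⟨h1, h2⟩).symm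
  · rintro ⟨i, hi, a, b, ha0, hb0, hab, hp⟩
    obtain ⟨x, hx, hfx⟩ := (hd i hi).1.surjOn (⟨ha0, by linarith⟩ : a ∈ Set.Icc (0:ℝ) 1)
    refine ⟨x, ⟨le_trans (ht_nonneg i) hx.1, le_trans hx.2 (ht_le_one _)⟩, ?_⟩
    rw [key i hi x hx, hfx, ← hp]
    congr 1
    rw [show b = 1 - a by linarith]
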